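/- arXiv:2305.18375 — 2 statements merged into one kernel-verified Lean document; each statement's English description precedes it below -/
import Mathlib

section
/- Let P0 be a probability distribution on [0,∞) whose moment generating function t ↦ E_{x0∼P0}[e^{t x0}] is finite for all |t| < h, for some h > 0. For each λ > 0, let μ_λ be the distribution of ẑ0 = z0/λ, where x0 ∼ P0 and, conditionally on x0, z0 follows the Poisson distribution with rate λx0. Then μ_λ converges in distribution (weakly) to P0 as λ → ∞. -/
open MeasureTheory Filter Topology

set_option linter.unusedSectionVars false
set_option linter.unusedVariables false

/-- The Poisson probability mass function `Pois(k; μ) = μ^k e^{−μ}/k!`. -/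
noncomputable def poissonPMF (μ : ℝ) (k : ℕ) : ℝ :=
  μ ^ k * Real.exp (-μ) / (Nat.factorial k)

/-- The distribution `μ_λ` of `ẑ0 = z0/λ`, where `x0 ∼ P0` and `z0 | x0 ∼ Pois(λ x0)`:
a discrete measure on ℝ putting mass `∫ Pois(k; λ x0) dP0(x0)` at each point `k/λ`. -/
noncomputable def mixedPoissonScaled (P0 : Measure ℝ) (lam : ℝ) : Measure ℝ :=
  Measure.sum fun k : ℕ =>
    (ENNReal.ofReal (∫ x, poissonPMF (lam * x) k ∂P0)) • Measure.dirac ((k : ℝ) / lam)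

lemma hasSum_poissonPMF (μ : ℝ) : HasSum (poissonPMF μ) 1 := by
  have h := (NormedSpace.expSeries_div_hasSum_exp μ).mul_right (Real.exp (-μ))
  rw [← Real.exp_eq_exp_ℝ, ← Real.exp_add, add_neg_cancel, Real.exp_zero] at h
  have he : poissonPMF μ = fun k : ℕ => μ ^ k / (Nat.factorial k : ℝ) * Real.exp (-μ) := by
    ext k
    unfold poissonPMF
    ring
  rw [he]
  exact h

lemma poissonPMF_nonneg {μ : ℝ} (hμ : 0 ≤ μ) (k : ℕ) : 0 ≤ poissonPMF μ k := by
  unfold poissonPMF; positivity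

lemma hasSum_mean (μ : ℝ) : HasSum (fun k : ℕ => (k : ℝ) * poissonPMF μ k) μ := by
  have h := (hasSum_poissonPMF μ).mul_left μ
  rw [mul_one] at h
  have he : (fun k : ℕ => ((k+1 : ℕ) : ℝ) * poissonPMF μ (k+1)) = fun k => μ * poissonPMF μ k := by
    ext k
    unfold poissonPMF
    rw [Nat.factorial_succ]
    push_cast
    field_simp
    ring
  have h2 : HasSum (fun k : ℕ => ((k+1 : ℕ) : ℝ) * poissonPMF μ (k+1)) μ := he ▸ h
  refine (hasSum_nat_add_iff' (f := fun k : ℕ => (k : ℝ) * poissonPMF μ k) 1 (g := μ)).mp ?_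
  simpa using h2

lemma hasSum_fac2 (μ : ℝ) :
    HasSum (fun k : ℕ => (k : ℝ) * ((k:ℝ) - 1) * poissonPMF μ k) (μ^2) := by
  have h := (hasSum_poissonPMF μ).mul_left (μ^2)
  rw [mul_one] at h
  have he : (fun k : ℕ => ((k+2 : ℕ) : ℝ) * (((k+2:ℕ):ℝ) - 1) * poissonPMF μ (k+2)) =
      fun k => μ^2 * poissonPMF μ k := by
    ext k
    unfold poissonPMF
    rw [Nat.factorial_succ, Nat.factorial_succ]
    push_cast
    field_simp
    ring
  have h2 : HasSum (fun k : ℕ => ((k+2 : ℕ) : ℝ) * (((k+2:ℕ):ℝ) - 1) * poissonPMF μ (k+2)) (μ^2) :=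
    he ▸ h
  refine (hasSum_nat_add_iff' (f := fun k : ℕ => (k : ℝ) * ((k:ℝ)-1) * poissonPMF μ k) 2
    (g := μ^2)).mp ?_
  simpa [Finset.sum_range_succ] using h2

lemma hasSum_var (μ : ℝ) :
    HasSum (fun k : ℕ => ((k : ℝ) - μ)^2 * poissonPMF μ k) μ := by
  have h1 := hasSum_poissonPMF μ
  have h2 := hasSum_mean μ
  have h3 := hasSum_fac2 μ
  have := ((h3.add h2).add ((h2.mul_left (-(2*μ))).add (h1.mul_left (μ^2))))
  convert this using 2 with k
  · ring
  · ring

lemma abs_poissonPMF (μ : ℝ) (k : ℕ) :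
    |poissonPMF μ k| = Real.exp (|μ| - μ) * poissonPMF (|μ|) k := by
  have hexp : Real.exp (|μ| - μ) * Real.exp (-|μ|) = Real.exp (-μ) := by
    rw [← Real.exp_add]; congr 1; ring
  unfold poissonPMF
  rw [abs_div, abs_mul, abs_pow, Nat.abs_cast, abs_of_pos (Real.exp_pos _), ← hexp]
  ring

lemma summable_term (f : BoundedContinuousFunction ℝ ℝ) (c μ : ℝ) :
    Summable (fun k : ℕ => f ((k : ℝ) * c) * poissonPMF μ k) := by
  apply Summable.of_norm_bounded
    (g := fun k => ‖f‖ * (Real.exp (|μ| - μ) * poissonPMF (|μ|) k))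
  · exact ((hasSum_poissonPMF (|μ|)).summable.mul_left _).mul_left _
  · intro k
    rw [norm_mul]
    calc ‖f ((k:ℝ) * c)‖ * ‖poissonPMF μ k‖ ≤ ‖f‖ * ‖poissonPMF μ k‖ := by
          gcongr; exact f.norm_coe_le_norm _
      _ = ‖f‖ * (Real.exp (|μ| - μ) * poissonPMF (|μ|) k) := by
          rw [Real.norm_eq_abs, abs_poissonPMF]

lemma tendsto_pois_smear (f : BoundedContinuousFunction ℝ ℝ) {x : ℝ} (hx : 0 ≤ x) :
    Tendsto (fun lam : ℝ => ∑' k : ℕ, f ((k : ℝ) / lam) * poissonPMF (lam * x) k)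
      atTop (𝓝 (f x)) := by
  rw [Metric.tendsto_atTop]
  intro ε hε
  obtain ⟨δ, hδ, hfδ⟩ := Metric.continuousAt_iff.mp (f.continuous.continuousAt (x := x)) (ε/2)
    (by linarith)
  set C := 2 * ‖f‖ / δ^2 with hC
  have hC0 : 0 ≤ C := by positivity
  refine ⟨max 1 (2 * C * x / ε + 1), fun lam hlam => ?_⟩
  have hlam1 : (1:ℝ) ≤ lam := le_trans (le_max_left _ _) hlam
  have hlam0 : (0:ℝ) < lam := lt_of_lt_of_le one_pos hlam1
  have hlamN : 2 * C * x / ε + 1 ≤ lam := le_trans (le_max_right _ _) hlam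
  set μ := lam * x with hμdef
  have hμ : 0 ≤ μ := mul_nonneg hlam0.le hx
  have hpn : ∀ k, 0 ≤ poissonPMF μ k := poissonPMF_nonneg hμ
  have key : ∀ k : ℕ, |f ((k:ℝ)/lam) - f x| ≤ ε/2 + C * ((k:ℝ)/lam - x)^2 := by
    intro k
    rcases lt_or_ge (|(k:ℝ)/lam - x|) δ with hlt | hge
    · have := hfδ (show dist ((k:ℝ)/lam) x < δ by rwa [Real.dist_eq])
      rw [Real.dist_eq] at this
      nlinarith [sq_nonneg ((k:ℝ)/lam - x)]
    · have h1 : |f ((k:ℝ)/lam) - f x| ≤ 2 * ‖f‖ := by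
        calc |f ((k:ℝ)/lam) - f x| ≤ ‖f ((k:ℝ)/lam)‖ + ‖f x‖ := abs_sub _ _
        _ ≤ ‖f‖ + ‖f‖ := add_le_add (f.norm_coe_le_norm _) (f.norm_coe_le_norm _)
        _ = 2 * ‖f‖ := by ring
      have h2 : δ^2 ≤ ((k:ℝ)/lam - x)^2 := by
        calc δ^2 ≤ |(k:ℝ)/lam - x|^2 := by nlinarith [abs_nonneg ((k:ℝ)/lam - x)]
        _ = ((k:ℝ)/lam - x)^2 := sq_abs _
      have h3 : 2 * ‖f‖ = C * δ^2 := by rw [hC, div_mul_cancel₀ _ (pow_pos hδ 2).ne']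
      nlinarith
  have hvar : HasSum (fun k : ℕ => ((k:ℝ)/lam - x)^2 * poissonPMF μ k) (x / lam) := by
    have h := (hasSum_var μ).mul_left (1 / lam^2)
    have heq : (fun k : ℕ => 1/lam^2 * (((k:ℝ) - μ)^2 * poissonPMF μ k)) =
        fun k : ℕ => ((k:ℝ)/lam - x)^2 * poissonPMF μ k := by
      ext k
      rw [hμdef]
      field_simp
    have hval : 1/lam^2 * μ = x / lam := by
      rw [hμdef]; field_simp
    rwa [heq, hval] at h
  have hboundsum : HasSum
      (fun k : ℕ => ε/2 * poissonPMF μ k + C * (((k:ℝ)/lam - x)^2 * poissonPMF μ k))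
      (ε/2 + C * (x/lam)) := by
    simpa using ((hasSum_poissonPMF μ).mul_left (ε/2)).add (hvar.mul_left C)
  have hterm : Summable (fun k : ℕ => f ((k:ℝ)/lam) * poissonPMF μ k) := by
    have := summable_term f (1/lam) μ
    simpa [div_eq_mul_inv] using this
  have habs : ∀ k : ℕ, |(f ((k:ℝ)/lam) - f x) * poissonPMF μ k| ≤
      ε/2 * poissonPMF μ k + C * (((k:ℝ)/lam - x)^2 * poissonPMF μ k) := by
    intro k
    rw [abs_mul, abs_of_nonneg (hpn k)]
    calc |f ((k:ℝ)/lam) - f x| * poissonPMF μ k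
        ≤ (ε/2 + C * ((k:ℝ)/lam - x)^2) * poissonPMF μ k :=
          mul_le_mul_of_nonneg_right (key k) (hpn k)
      _ = _ := by ring
  have hsummand : Summable (fun k : ℕ => (f ((k:ℝ)/lam) - f x) * poissonPMF μ k) := by
    refine Summable.of_norm_bounded hboundsum.summable fun k => ?_
    rw [Real.norm_eq_abs]; exact habs k
  have h2 : HasSum (fun k : ℕ => f x * poissonPMF μ k) (f x) := by
    simpa using (hasSum_poissonPMF μ).mul_left (f x)
  have hdiff : (∑' k : ℕ, f ((k:ℝ)/lam) * poissonPMF μ k) - f x =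
      ∑' k : ℕ, (f ((k:ℝ)/lam) - f x) * poissonPMF μ k := by
    calc (∑' k : ℕ, f ((k:ℝ)/lam) * poissonPMF μ k) - f x
        = (∑' k : ℕ, f ((k:ℝ)/lam) * poissonPMF μ k) -
            ∑' k : ℕ, f x * poissonPMF μ k := by rw [h2.tsum_eq]
      _ = ∑' k : ℕ, (f ((k:ℝ)/lam) * poissonPMF μ k - f x * poissonPMF μ k) :=
          (Summable.tsum_sub hterm h2.summable).symm
      _ = ∑' k : ℕ, (f ((k:ℝ)/lam) - f x) * poissonPMF μ k := by
          apply tsum_congr; intro k; ring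
  rw [Real.dist_eq, hdiff]
  have hfinal : |∑' k : ℕ, (f ((k:ℝ)/lam) - f x) * poissonPMF μ k| ≤ ε/2 + C * (x/lam) := by
    calc |∑' k : ℕ, (f ((k:ℝ)/lam) - f x) * poissonPMF μ k|
        ≤ ∑' k : ℕ, |(f ((k:ℝ)/lam) - f x) * poissonPMF μ k| := by
          have hs : Summable (fun k : ℕ => ‖(f ((k:ℝ)/lam) - f x) * poissonPMF μ k‖) := by
            simp only [Real.norm_eq_abs]; exact hsummand.abs
          have := norm_tsum_le_tsum_norm
            (f := fun k : ℕ => (f ((k:ℝ)/lam) - f x) * poissonPMF μ k) hs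
          simp only [Real.norm_eq_abs] at this
          exact this
      _ ≤ ∑' k : ℕ, (ε/2 * poissonPMF μ k + C * (((k:ℝ)/lam - x)^2 * poissonPMF μ k)) :=
          Summable.tsum_le_tsum habs hsummand.abs hboundsum.summable
      _ = ε/2 + C * (x/lam) := hboundsum.tsum_eq
  have hlt : C * (x/lam) < ε/2 := by
    have h4 : 2 * C * x < ε * lam := by
      have h5 : 2*C*x/ε < lam := by linarith
      rw [div_lt_iff₀ hε] at h5; linarith
    have he : C * (x/lam) = C*x/lam := by ring
    rw [he, div_lt_iff₀ hlam0]
    linarith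
  linarith

lemma continuous_pois (lam : ℝ) (k : ℕ) :
    Continuous (fun x : ℝ => poissonPMF (lam * x) k) := by
  unfold poissonPMF
  fun_prop

lemma poissonPMF_le_one {μ : ℝ} (hμ : 0 ≤ μ) (k : ℕ) : poissonPMF μ k ≤ 1 :=
  le_hasSum (hasSum_poissonPMF μ) k fun j _ => poissonPMF_nonneg hμ j

section A
variable (P0 : Measure ℝ) [IsProbabilityMeasure P0] (hsupp : P0 (Set.Iio 0) = 0)

include hsupp in
lemma ae_nonneg : ∀ᵐ x ∂P0, 0 ≤ x := by
  rw [ae_iff]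
  have he : {x : ℝ | ¬ 0 ≤ x} = Set.Iio 0 := by ext x; simp [not_le]
  rwa [he]

variable {lam : ℝ} (hlam : 0 < lam)
include hsupp hlam

lemma integrable_pois (k : ℕ) : Integrable (fun x => poissonPMF (lam * x) k) P0 := by
  refine Integrable.mono' (integrable_const 1) (continuous_pois lam k).aestronglyMeasurable ?_
  filter_upwards [ae_nonneg P0 hsupp] with x hx
  have hμ : 0 ≤ lam * x := mul_nonneg hlam.le hx
  rw [Real.norm_eq_abs, abs_of_nonneg (poissonPMF_nonneg hμ k)]
  exact poissonPMF_le_one hμ k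

lemma lmass : (∑' k : ℕ, ∫⁻ x, ENNReal.ofReal (poissonPMF (lam * x) k) ∂P0) = 1 := by
  rw [← lintegral_tsum fun k => ((continuous_pois lam k).measurable.ennreal_ofReal).aemeasurable]
  have h : ∀ᵐ x ∂P0, (∑' k : ℕ, ENNReal.ofReal (poissonPMF (lam * x) k)) = 1 := by
    filter_upwards [ae_nonneg P0 hsupp] with x hx
    have hμ : 0 ≤ lam * x := mul_nonneg hlam.le hx
    rw [← ENNReal.ofReal_tsum_of_nonneg (poissonPMF_nonneg hμ) (hasSum_poissonPMF _).summable,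
      (hasSum_poissonPMF _).tsum_eq, ENNReal.ofReal_one]
  rw [lintegral_congr_ae h, lintegral_one, measure_univ]

lemma mass : (∑' k : ℕ, ENNReal.ofReal (∫ x, poissonPMF (lam * x) k ∂P0)) = 1 := by
  have h1 : ∀ k : ℕ, ENNReal.ofReal (∫ x, poissonPMF (lam * x) k ∂P0) =
      ∫⁻ x, ENNReal.ofReal (poissonPMF (lam * x) k) ∂P0 := by
    intro k
    refine ofReal_integral_eq_lintegral_ofReal (integrable_pois P0 hsupp hlam k) ?_
    filter_upwards [ae_nonneg P0 hsupp] with x hx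
    exact poissonPMF_nonneg (mul_nonneg hlam.le hx) k
  rw [tsum_congr h1]
  exact lmass P0 hsupp hlam

lemma isProb : IsProbabilityMeasure (mixedPoissonScaled P0 lam) := by
  constructor
  rw [mixedPoissonScaled, Measure.sum_apply _ MeasurableSet.univ]
  simp only [Measure.smul_apply, measure_univ, smul_eq_mul, mul_one]
  exact mass P0 hsupp hlam

lemma stepA (f : BoundedContinuousFunction ℝ ℝ) :
    ∫ y, f y ∂(mixedPoissonScaled P0 lam) =
      ∫ x, (∑' k : ℕ, f ((k : ℝ) / lam) * poissonPMF (lam * x) k) ∂P0 := by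
  have hprob := isProb P0 hsupp hlam
  have hfint : Integrable (fun y => f y) (mixedPoissonScaled P0 lam) := f.integrable _
  rw [mixedPoissonScaled] at hfint ⊢
  rw [integral_sum_measure hfint]
  have h1 : ∀ k : ℕ, ∫ y, f y ∂((ENNReal.ofReal (∫ x, poissonPMF (lam * x) k ∂P0)) •
      Measure.dirac ((k : ℝ) / lam)) = (∫ x, poissonPMF (lam * x) k ∂P0) * f ((k:ℝ)/lam) := by
    intro k
    rw [integral_smul_measure, integral_dirac, ENNReal.toReal_ofReal, smul_eq_mul]
    refine integral_nonneg_of_ae ?_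
    filter_upwards [ae_nonneg P0 hsupp] with x hx
    exact poissonPMF_nonneg (mul_nonneg hlam.le hx) k
  rw [tsum_congr h1]
  have h2 : ∀ k : ℕ, (∫ x, poissonPMF (lam * x) k ∂P0) * f ((k:ℝ)/lam) =
      ∫ x, f ((k:ℝ)/lam) * poissonPMF (lam * x) k ∂P0 := by
    intro k
    rw [integral_const_mul, mul_comm]
  rw [tsum_congr h2]
  rw [← integral_tsum]
  · intro k
    exact (continuous_const.mul (continuous_pois lam k)).aestronglyMeasurable
  · have hb : ∀ k : ℕ, ∫⁻ x, ‖f ((k:ℝ)/lam) * poissonPMF (lam * x) k‖₊ ∂P0 ≤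
        (‖f‖₊ : ENNReal) * ∫⁻ x, ENNReal.ofReal (poissonPMF (lam * x) k) ∂P0 := by
      intro k
      rw [← lintegral_const_mul' _ _ ENNReal.coe_ne_top]
      apply lintegral_mono_ae
      filter_upwards [ae_nonneg P0 hsupp] with x hx
      have hμ : 0 ≤ lam * x := mul_nonneg hlam.le hx
      rw [nnnorm_mul, ENNReal.coe_mul, ← Real.enorm_eq_ofReal (poissonPMF_nonneg hμ k), enorm_eq_nnnorm]
      gcongr
      exact_mod_cast f.norm_coe_le_norm _
    have hcalc : (∑' k : ℕ, ∫⁻ x, ‖f ((k:ℝ)/lam) * poissonPMF (lam * x) k‖₊ ∂P0) < ⊤ :=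
      calc (∑' k : ℕ, ∫⁻ x, ‖f ((k:ℝ)/lam) * poissonPMF (lam * x) k‖₊ ∂P0)
        ≤ ∑' k : ℕ, (‖f‖₊ : ENNReal) * ∫⁻ x, ENNReal.ofReal (poissonPMF (lam * x) k) ∂P0 :=
          ENNReal.tsum_le_tsum hb
      _ = (‖f‖₊ : ENNReal) * ∑' k : ℕ, ∫⁻ x, ENNReal.ofReal (poissonPMF (lam * x) k) ∂P0 :=
          ENNReal.tsum_mul_left
      _ = ‖f‖₊ := by rw [lmass P0 hsupp hlam, mul_one]
      _ < ⊤ := ENNReal.coe_lt_top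
    exact hcalc.ne
end A


/-- If `P0` is a probability distribution on `[0,∞)` whose moment generating function
`t ↦ E_{x0∼P0}[e^{t x0}]` is finite for all `|t| < h` for some `h > 0`, then the
distribution `μ_λ` of `ẑ0 = z0/λ` (with `x0 ∼ P0`, `z0 | x0 ∼ Pois(λ x0)`) converges
weakly (in distribution) to `P0` as `λ → ∞`, i.e. integrals of every bounded continuous
function converge. -/
theorem mixedPoissonScaled_tendsto_weakly
    (P0 : Measure ℝ) [IsProbabilityMeasure P0] (hsupp : P0 (Set.Iio 0) = 0)
    (h : ℝ) (hh : 0 < h)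
    (hmgf : ∀ t : ℝ, |t| < h → Integrable (fun x => Real.exp (t * x)) P0) :
    ∀ f : BoundedContinuousFunction ℝ ℝ,
      Tendsto (fun lam : ℝ => ∫ y, f y ∂(mixedPoissonScaled P0 lam)) atTop
        (𝓝 (∫ x, f x ∂P0)) := by
  intro f
  have hae := ae_nonneg P0 hsupp
  have hB : Tendsto (fun lam : ℝ =>
      ∫ x, (∑' k : ℕ, f ((k:ℝ)/lam) * poissonPMF (lam * x) k) ∂P0) atTop
      (𝓝 (∫ x, f x ∂P0)) := by
    apply tendsto_integral_filter_of_dominated_convergence (bound := fun _ => ‖f‖)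
    · apply Eventually.of_forall
      intro lam
      apply aestronglyMeasurable_of_tendsto_ae (u := atTop)
        (f := fun n x => ∑ k ∈ Finset.range n, f ((k:ℝ)/lam) * poissonPMF (lam * x) k)
      · intro n
        apply Continuous.aestronglyMeasurable
        exact continuous_finset_sum _ fun k _ => continuous_const.mul (continuous_pois lam k)
      · apply ae_of_all
        intro x
        have hs : Summable (fun k : ℕ => f ((k:ℝ)/lam) * poissonPMF (lam * x) k) := by
          have := summable_term f (1/lam) (lam * x)
          simpa [div_eq_mul_inv] using this
        exact hs.hasSum.tendsto_sum_nat
    · filter_upwards [eventually_ge_atTop (1:ℝ)] with lam hlam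
      filter_upwards [hae] with x hx
      have hμ : 0 ≤ lam * x := mul_nonneg (by linarith) hx
      have hsn : ∀ k : ℕ, ‖f ((k:ℝ)/lam) * poissonPMF (lam * x) k‖ ≤
          ‖f‖ * poissonPMF (lam * x) k := by
        intro k
        rw [norm_mul, Real.norm_eq_abs (poissonPMF _ _), abs_of_nonneg (poissonPMF_nonneg hμ k)]
        gcongr
        · exact poissonPMF_nonneg hμ k
        · exact f.norm_coe_le_norm _
      have hs2 : Summable (fun k : ℕ => ‖f ((k:ℝ)/lam) * poissonPMF (lam * x) k‖) :=
        Summable.of_nonneg_of_le (fun k => norm_nonneg _) hsn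
          ((hasSum_poissonPMF _).summable.mul_left _)
      calc ‖∑' k : ℕ, f ((k:ℝ)/lam) * poissonPMF (lam * x) k‖
          ≤ ∑' k : ℕ, ‖f ((k:ℝ)/lam) * poissonPMF (lam * x) k‖ := norm_tsum_le_tsum_norm hs2
        _ ≤ ∑' k : ℕ, ‖f‖ * poissonPMF (lam * x) k :=
            Summable.tsum_le_tsum hsn hs2 ((hasSum_poissonPMF _).summable.mul_left _)
        _ = ‖f‖ := by rw [tsum_mul_left, (hasSum_poissonPMF _).tsum_eq, mul_one]
    · exact integrable_const _
    · filter_upwards [hae] with x hx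
      exact tendsto_pois_smear f hx
  refine Tendsto.congr' ?_ hB
  filter_upwards [eventually_gt_atTop (0:ℝ)] with lam hlam
  exact (stepA P0 hsupp hlam f).symm
end

section
/- (Shifted-binomial posterior for the binomial JUMP chain) Let x0 be a non-negative integer and 0 < α_t < α_{t−1} ≤ 1 with α_{t−1} < 1. Let z_{t−1} ∼ Binomial(x0, α_{t−1}) and, conditionally on z_{t−1}, let z_t ∼ Binomial(z_{t−1}, α_t/α_{t−1}). Then the conditional distribution of z_{t−1} given z_t is a shifted binomial: conditionally on z_t, z_{t−1} − z_t ∼ Binomial(x0 − z_t, (α_{t−1} − α_t)/(1 − α_t)). Equivalently, for all integers z_t ≤ m ≤ x0, Binomial(m; x0, α_{t−1}) Binomial(z_t; m, α_t/α_{t−1}) / Binomial(z_t; x0, α_t) = Binomial(m − z_t; x0 − z_t, (α_{t−1} − α_t)/(1 − α_t)). -/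
/-- The binomial probability mass function `Binomial(k; n, p) = C(n,k) p^k (1−p)^{n−k}`. -/
noncomputable def binomialPMF (n : ℕ) (p : ℝ) (k : ℕ) : ℝ :=
  (n.choose k : ℝ) * p ^ k * (1 - p) ^ (n - k)

/-- Shifted-binomial posterior for the binomial JUMP chain: with
`z_{t−1} ∼ Binomial(x0, α_{t−1})` and `z_t | z_{t−1} ∼ Binomial(z_{t−1}, α_t/α_{t−1})`
(so that `z_t ∼ Binomial(x0, α_t)` marginally), the conditional distribution of
`z_{t−1}` given `z_t` satisfies, for all integers `z_t ≤ m ≤ x0`,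
`Binomial(m; x0, α_{t−1}) Binomial(z_t; m, α_t/α_{t−1}) / Binomial(z_t; x0, α_t)
  = Binomial(m − z_t; x0 − z_t, (α_{t−1} − α_t)/(1 − α_t))`.
Here `a` plays the role of `α_{t−1}` and `b` the role of `α_t`, with
`0 < b < a ≤ 1` and `a < 1`. -/
theorem binomial_jump_shifted_binomial_posterior
    (x0 : ℕ) (a b : ℝ) (hb : 0 < b) (hba : b < a) (ha1 : a ≤ 1) (ha : a < 1)
    (z m : ℕ) (hzm : z ≤ m) (hmx : m ≤ x0) :
    binomialPMF x0 a m * binomialPMF m (b / a) z / binomialPMF x0 b z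
      = binomialPMF (x0 - z) ((a - b) / (1 - b)) (m - z) := by
  obtain ⟨d, rfl⟩ := Nat.exists_eq_add_of_le hzm
  obtain ⟨e, rfl⟩ := Nat.exists_eq_add_of_le hmx
  have ha0 : (0:ℝ) < a := hb.trans hba
  have hb1 : b < 1 := hba.trans_le ha1
  have h1b : (0:ℝ) < 1 - b := by linarith
  have hchoose : ((z + d + e).choose (z + d) : ℝ) * ((z + d).choose z : ℝ)
      = ((z + d + e).choose z : ℝ) * ((d + e).choose d : ℝ) := by
    have := Nat.choose_mul (n := z + d + e) (k := z + d) (s := z)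
      (Nat.le_add_right _ _)
    have h2 : z + d + e - z = d + e := by omega
    have h3 : z + d - z = d := by omega
    rw [h2, h3] at this
    exact_mod_cast congrArg (fun t : ℕ => (t : ℝ)) this
  have hne : ((z + d + e).choose z : ℝ) ≠ 0 := by
    exact_mod_cast Nat.choose_pos (by omega) |>.ne'
  simp only [binomialPMF]
  have e1 : z + d + e - (z + d) = e := by omega
  have e2 : z + d - z = d := by omega
  have e3 : z + d + e - z = d + e := by omega
  have e4 : d + e - d = e := by omega
  rw [e1, e2, e3, e4]
  have hba' : 1 - b / a = (a - b) / a := by field_simp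
  have hab' : 1 - (a - b) / (1 - b) = (1 - a) / (1 - b) := by field_simp; ring
  rw [hba', hab', div_pow, div_pow, div_pow, div_pow]
  rw [div_eq_iff (by positivity : (((z + d + e).choose z : ℝ)) * b ^ z * (1 - b) ^ (d + e) ≠ 0)]
  field_simp
  linear_combination (a ^ (z + d) * (1 - a) ^ e * (a - b) ^ d * (1 - b) ^ (d + e)) * hchoose
end
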